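/- (Quantum agreement theorem.) Let (Ω, Q_1, …, Q_N) be a knowledge model, let ρ be a DOVM on Ω with values in n×n complex matrices such that Tr[ρ(Q)] ≠ 0 for every cell Q of every partition Q_i, let σ_1, …, σ_N be density operators, and define E := ⋂_{i=1}^N {ω ∈ Ω : ρ_{|Q_i(ω)} = σ_i}. If Tr[ρ(C(E))] ≠ 0, then σ_1 = σ_2 = ⋯ = σ_N = ρ_{|C(E)}. -/

import Mathlib

open scoped ComplexOrder

/-- Knowledge operator of agent `i`: the set of worlds where agent `i` knows `E`. -/
def Know {Ω : Type*} {N : ℕ} (Q : Fin N → Ω → Set Ω) (i : Fin N) (E : Set Ω) : Set Ω :=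
  {ω | Q i ω ⊆ E}

/-- Mutual knowledge hierarchy: `Mutual Q E 0 = E`,
`Mutual Q E (m+1) = ⋂ i, K_i (Mutual Q E m)`. -/
def Mutual {Ω : Type*} {N : ℕ} (Q : Fin N → Ω → Set Ω) (E : Set Ω) : ℕ → Set Ω
  | 0 => E
  | m + 1 => ⋂ i : Fin N, Know Q i (Mutual Q E m)

/-- Common knowledge: `C(E) = ⋂ m, M_m(E)`. -/
def CommonKnow {Ω : Type*} {N : ℕ} (Q : Fin N → Ω → Set Ω) (E : Set Ω) : Set Ω :=
  ⋂ m : ℕ, Mutual Q E m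

/-- The conditional state `ρ(Λ)/Tr[ρ(Λ)]` of a DOVM with respect to an event `Λ`. -/
noncomputable def condState {Ω : Type*} {n : ℕ}
    (ρ : Set Ω → Matrix (Fin n) (Fin n) ℂ) (Λ : Set Ω) : Matrix (Fin n) (Fin n) ℂ :=
  ((ρ Λ).trace)⁻¹ • ρ Λ

/-- Finite additivity of a finitely additive set function over a pairwise disjoint
finite family of sets. -/
lemma rho_sum {Ω : Type*} {n : ℕ} (ρ : Set Ω → Matrix (Fin n) (Fin n) ℂ)
    (h0 : ρ (∅ : Set Ω) = 0)
    (hadd : ∀ Λ₁ Λ₂ : Set Ω, Disjoint Λ₁ Λ₂ → ρ (Λ₁ ∪ Λ₂) = ρ Λ₁ + ρ Λ₂) :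
    ∀ S : Finset (Set Ω), ((S : Set (Set Ω)).PairwiseDisjoint id) →
      ρ (⋃ s ∈ S, s) = ∑ s ∈ S, ρ s := by
  classical
  intro S
  induction S using Finset.induction_on with
  | empty => intro _; simpa using h0
  | insert a s hnot ih =>
    intro hdisj
    have hd : Disjoint a (⋃ t ∈ s, t) := by
      simp only [Set.disjoint_iUnion_right]
      intro t ht
      exact hdisj (by simp) (by simp [ht]) (fun heq => hnot (heq ▸ ht))
    rw [Finset.set_biUnion_insert, hadd _ _ hd,
      ih (hdisj.subset (by exact_mod_cast Finset.subset_insert a s)), Finset.sum_insert hnot]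

/-- **Quantum agreement theorem.** If the conditional density operators `σ i` assigned by
the agents are common knowledge (on a set of nonzero trace), then they all coincide with
the conditional state on the common knowledge set. -/
theorem quantum_agreement {Ω : Type*} [Fintype Ω] [Nonempty Ω] {N : ℕ} {n : ℕ}
    (Q : Fin N → Ω → Set Ω)
    (hmem : ∀ i ω, ω ∈ Q i ω)
    (hcell : ∀ i ω ω', ω' ∈ Q i ω → Q i ω' = Q i ω)
    (ρ : Set Ω → Matrix (Fin n) (Fin n) ℂ)
    (hpos : ∀ Λ : Set Ω, (ρ Λ).PosSemidef)
    (htr : (ρ (Set.univ : Set Ω)).trace = 1)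
    (hadd : ∀ Λ₁ Λ₂ : Set Ω, Disjoint Λ₁ Λ₂ → ρ (Λ₁ ∪ Λ₂) = ρ Λ₁ + ρ Λ₂)
    (hcelltr : ∀ (i : Fin N) (ω : Ω), (ρ (Q i ω)).trace ≠ 0)
    (σ : Fin N → Matrix (Fin n) (Fin n) ℂ)
    (hσ : ∀ i, (σ i).PosSemidef ∧ (σ i).trace = 1)
    (E : Set Ω)
    (hE : E = ⋂ i : Fin N, {ω : Ω | condState ρ (Q i ω) = σ i})
    (hCtr : (ρ (CommonKnow Q E)).trace ≠ 0) :
    ∀ i : Fin N, σ i = condState ρ (CommonKnow Q E) := by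
  classical
  intro i
  set C := CommonKnow Q E with hCdef
  have hfix : ∀ ω ∈ C, Q i ω ⊆ C := by
    intro ω hω ω' hω'
    refine Set.mem_iInter.2 fun m => ?_
    have h1 : ω ∈ Mutual Q E (m + 1) := Set.mem_iInter.1 hω (m + 1)
    have h2 : ω ∈ Know Q i (Mutual Q E m) := Set.mem_iInter.1 h1 i
    exact h2 hω'
  have hCE : C ⊆ E := fun ω hω => Set.mem_iInter.1 hω 0
  have hcellρ : ∀ ω ∈ C, ρ (Q i ω) = (ρ (Q i ω)).trace • σ i := by
    intro ω hω
    have hωE : ω ∈ E := hCE hω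
    rw [hE] at hωE
    have hcond : condState ρ (Q i ω) = σ i := Set.mem_iInter.1 hωE i
    have h := congrArg (fun M => (ρ (Q i ω)).trace • M) hcond
    simpa [condState, smul_smul, mul_inv_cancel₀ (hcelltr i ω)] using h
  have hρempty : ρ (∅ : Set Ω) = 0 := by
    have h := hadd ∅ ∅ (by simp)
    simp only [Set.union_empty] at h
    exact (left_eq_add.mp h)
  -- the set of distinct cells of agent i inside C
  set T : Finset (Set Ω) := (Set.toFinite C).toFinset.image (Q i) with hTdef
  have hTmem : ∀ s ∈ T, ∃ ω ∈ C, Q i ω = s := by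
    intro s hs
    rw [hTdef, Finset.mem_image] at hs
    obtain ⟨ω, hω, rfl⟩ := hs
    exact ⟨ω, (Set.Finite.mem_toFinset _).1 hω, rfl⟩
  have hunion : (⋃ s ∈ T, s) = C := by
    ext x
    constructor
    · intro hx
      simp only [Set.mem_iUnion] at hx
      obtain ⟨s, hs, hxs⟩ := hx
      obtain ⟨ω, hω, rfl⟩ := hTmem s hs
      exact hfix ω hω hxs
    · intro hx
      refine Set.mem_iUnion.2 ⟨Q i x, Set.mem_iUnion.2 ⟨?_, hmem i x⟩⟩
      rw [hTdef, Finset.mem_image]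
      exact ⟨x, (Set.Finite.mem_toFinset _).2 hx, rfl⟩
  have hpd : (T : Set (Set Ω)).PairwiseDisjoint id := by
    intro s hs t ht hst
    obtain ⟨ω, hω, rfl⟩ := hTmem s hs
    obtain ⟨ω', hω', rfl⟩ := hTmem t ht
    show Disjoint (Q i ω) (Q i ω')
    rw [Set.disjoint_left]
    intro x hxs hxt
    exact hst (((hcell i ω x hxs).symm.trans (hcell i ω' x hxt)))
  have hsum : ρ C = ∑ s ∈ T, ρ s := by
    rw [← hunion]; exact rho_sum ρ hρempty hadd T hpd
  have h2 : ∑ s ∈ T, ρ s = (∑ s ∈ T, (ρ s).trace) • σ i := by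
    rw [Finset.sum_smul]
    refine Finset.sum_congr rfl fun s hs => ?_
    obtain ⟨ω, hω, rfl⟩ := hTmem s hs
    exact hcellρ ω hω
  have htrC : (ρ C).trace = ∑ s ∈ T, (ρ s).trace := by
    rw [hsum, Matrix.trace_sum]
  have hkey : ρ C = (ρ C).trace • σ i := by
    rw [htrC]; exact hsum.trans h2
  have : condState ρ C = σ i := by
    rw [condState]
    nth_rewrite 2 [hkey]
    rw [smul_smul, inv_mul_cancel₀ hCtr, one_smul]
  exact this.symm
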